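/- Let k ≥ 1 and G = H_1 × ⋯ × H_k with H_i dihedral of order 8 generated by a_i (order 4) and involution b_i inverting a_i. Set Ω = {a_i², b_i, a_i b_i : 1 ≤ i ≤ k}. Then every element of Ω is an involution, Ω generates G, and for any two distinct elements x, y ∈ Ω the product xy lies in the subgroup ⟨a_1², …, a_k²⟩ if and only if {x, y} ⊆ {a_1², …, a_k²}; in particular the product of two distinct elements of Ω \ {a_i² : i} never lies in ⟨a_i² : 1 ≤ i ≤ k⟩. -/

import Mathlib

open DihedralGroup

abbrev GK (k : ℕ) := Fin k → DihedralGroup 4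

def aK (k : ℕ) (i : Fin k) : GK k := Pi.mulSingle i (DihedralGroup.r 1)

def bK (k : ℕ) (i : Fin k) : GK k := Pi.mulSingle i (DihedralGroup.sr 0)

def OmegaK (k : ℕ) : Set (GK k) :=
  {x | ∃ i, x = (aK k i) ^ 2 ∨ x = bK k i ∨ x = aK k i * bK k i}

lemma aK_sq (k : ℕ) (i : Fin k) : (aK k i) ^ 2 = Pi.mulSingle i (r 2) := by
  rw [aK, ← Pi.mulSingle_pow, show (r 1 : DihedralGroup 4) ^ 2 = r 2 by decide]

lemma aK_bK (k : ℕ) (i : Fin k) : aK k i * bK k i = Pi.mulSingle i (sr 3) := by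
  rw [aK, bK, ← Pi.mulSingle_mul, show (r 1 : DihedralGroup 4) * sr 0 = sr 3 by decide]

lemma omega_form {k : ℕ} {x : GK k} (hx : x ∈ OmegaK k) :
    ∃ (i : Fin k) (g : DihedralGroup 4),
      (g = r 2 ∨ g = sr 0 ∨ g = sr 3) ∧ x = Pi.mulSingle i g := by
  obtain ⟨i, h | h | h⟩ := hx
  · exact ⟨i, r 2, Or.inl rfl, by rw [h, aK_sq]⟩
  · exact ⟨i, sr 0, Or.inr (Or.inl rfl), h⟩
  · exact ⟨i, sr 3, Or.inr (Or.inr rfl), by rw [h, aK_bK]⟩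

def Nsub (k : ℕ) : Subgroup (GK k) where
  carrier := {x | ∀ j, x j = 1 ∨ x j = r 2}
  one_mem' := fun _ => Or.inl rfl
  mul_mem' := by
    intro x y hx hy j
    rcases hx j with h | h <;> rcases hy j with h' | h' <;>
      simp only [Pi.mul_apply, h, h'] <;> [left; right; right; left] <;> rfl
  inv_mem' := by
    intro x hx j
    rcases hx j with h | h <;> simp only [Pi.inv_apply, h] <;> [left; right] <;> rfl

lemma closure_le_Nsub (k : ℕ) :
    Subgroup.closure {z : GK k | ∃ i, z = (aK k i) ^ 2} ≤ Nsub k := by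
  rw [Subgroup.closure_le]
  rintro z ⟨i, rfl⟩ j
  rw [aK_sq]
  by_cases h : j = i
  · subst h; right; simp
  · left; simp [Pi.mulSingle_eq_of_ne h]

theorem omega_involutions_generate (k : ℕ) (hk : 1 ≤ k) :
    (∀ x ∈ OmegaK k, x * x = 1 ∧ x ≠ 1) ∧
    Subgroup.closure (OmegaK k) = ⊤ ∧
    (∀ x ∈ OmegaK k, ∀ y ∈ OmegaK k, x ≠ y →
      (x * y ∈ Subgroup.closure {z : GK k | ∃ i, z = (aK k i) ^ 2} ↔
        ((∃ i, x = (aK k i) ^ 2) ∧ ∃ i, y = (aK k i) ^ 2))) := by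
  refine ⟨?_, ?_, ?_⟩
  · intro x hx
    obtain ⟨i, g, hg, rfl⟩ := omega_form hx
    constructor
    · rw [← Pi.mulSingle_mul]
      have : g * g = 1 := by rcases hg with rfl | rfl | rfl <;> decide
      rw [this, Pi.mulSingle_one]
    · intro h
      have := congrFun h i
      simp only [Pi.mulSingle_eq_same, Pi.one_apply] at this
      rcases hg with rfl | rfl | rfl <;> exact absurd this (by decide)
  · rw [eq_top_iff]
    intro x _
    apply Subgroup.pi_mem_of_mulSingle_mem
    intro i
    have hb : Pi.mulSingle i (sr 0) ∈ Subgroup.closure (OmegaK k) :=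
      Subgroup.subset_closure ⟨i, Or.inr (Or.inl rfl)⟩
    have hab : Pi.mulSingle i (sr 3) ∈ Subgroup.closure (OmegaK k) :=
      Subgroup.subset_closure ⟨i, Or.inr (Or.inr (aK_bK k i).symm)⟩
    have hr1 : Pi.mulSingle i (r 1) ∈ Subgroup.closure (OmegaK k) := by
      have h := mul_mem hab hb
      rw [← Pi.mulSingle_mul, sr_mul_sr, show ((0 : ZMod 4) - 3) = 1 by decide] at h
      exact h
    have hrm : ∀ m : ZMod 4, Pi.mulSingle i (r m) ∈ Subgroup.closure (OmegaK k) := by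
      intro m
      have hm : (r m : DihedralGroup 4) = r 1 ^ m.val := by
        rw [r_one_pow]
        congr 1
        simp [ZMod.natCast_val, ZMod.cast_id]
      rw [hm, Pi.mulSingle_pow]
      exact pow_mem hr1 _
    rcases x i with m | m
    · exact hrm m
    · have hm : (sr m : DihedralGroup 4) = r (-m) * sr 0 := by
        rw [r_mul_sr]; ring_nf
      rw [hm, Pi.mulSingle_mul]
      exact mul_mem (hrm (-m)) hb
  · intro x hx y hy hxy
    constructor
    · intro hmem
      obtain ⟨i, g, hg, rfl⟩ := omega_form hx
      obtain ⟨j, h, hh, rfl⟩ := omega_form hy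
      have hN := closure_le_Nsub k hmem
      by_cases hij : i = j
      · subst hij
        have hgi := hN i
        rw [Pi.mul_apply, Pi.mulSingle_eq_same, Pi.mulSingle_eq_same] at hgi
        have hne : g ≠ h := fun e => hxy (by rw [e])
        rcases hg with rfl | rfl | rfl
        · rcases hh with rfl | rfl | rfl
          · exact ⟨⟨i, (aK_sq k i).symm⟩, ⟨i, (aK_sq k i).symm⟩⟩
          · exact absurd hgi (by decide)
          · exact absurd hgi (by decide)
        · rcases hh with rfl | rfl | rfl
          · exact absurd hgi (by decide)
          · exact absurd rfl hne
          · exact absurd hgi (by decide)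
        · rcases hh with rfl | rfl | rfl
          · exact absurd hgi (by decide)
          · exact absurd hgi (by decide)
          · exact absurd rfl hne
      · have hgi := hN i
        have hgj := hN j
        rw [Pi.mul_apply, Pi.mulSingle_eq_same,
          Pi.mulSingle_eq_of_ne hij, mul_one] at hgi
        rw [Pi.mul_apply, Pi.mulSingle_eq_same,
          Pi.mulSingle_eq_of_ne (Ne.symm hij), one_mul] at hgj
        refine ⟨⟨i, ?_⟩, ⟨j, ?_⟩⟩
        · rcases hg with rfl | rfl | rfl
          · exact (aK_sq k i).symm
          · exact absurd hgi (by decide)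
          · exact absurd hgi (by decide)
        · rcases hh with rfl | rfl | rfl
          · exact (aK_sq k j).symm
          · exact absurd hgj (by decide)
          · exact absurd hgj (by decide)
    · rintro ⟨⟨i, rfl⟩, ⟨j, rfl⟩⟩
      exact mul_mem (Subgroup.subset_closure ⟨i, rfl⟩) (Subgroup.subset_closure ⟨j, rfl⟩)
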